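/- Suppose each of k independent mechanisms M_1,…,M_k is (ε,δ)-differentially private with ε < 1/√k. Then the composed mechanism S ↦ (M_1(S),…,M_k(S)) is (ε', kδ + δ')-differentially private where ε' = √(2k·ln(1/δ'))·ε + kε·(e^ε − 1)/(e^ε + 1), for every δ' > 0. -/

import Mathlib

open MeasureTheory ENNReal Real


private lemma Npos {w : ℝ} (hw0 : 0 ≤ w) (hw1 : w ≤ 1) (h : ℝ) :
    0 < w * exp h + (1 - w) * exp (-h) := by
  rcases eq_or_lt_of_le hw0 with h0 | h0
  · simpa [← h0] using exp_pos (-h)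
  · have := exp_pos h
    have := exp_pos (-h)
    nlinarith

/-- two-point Hoeffding lemma -/
lemma hoeff_two_point {w : ℝ} (hw0 : 0 ≤ w) (hw1 : w ≤ 1) {h : ℝ} (hh : 0 ≤ h) :
    w * exp h + (1 - w) * exp (-h) ≤ exp ((2 * w - 1) * h + h ^ 2 / 2) := by
  set N : ℝ → ℝ := fun x => w * exp x + (1 - w) * exp (-x) with hN
  set N₁ : ℝ → ℝ := fun x => w * exp x - (1 - w) * exp (-x) with hN₁
  have hNpos : ∀ x, 0 < N x := fun x => Npos hw0 hw1 x
  set D : ℝ → ℝ := fun x => (2 * w - 1) * x + x ^ 2 / 2 - log (N x) with hD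
  set D' : ℝ → ℝ := fun x => (2 * w - 1) + x - N₁ x / N x with hD'
  have hNd : ∀ x, HasDerivAt N (N₁ x) x := by
    intro x
    have h1 : HasDerivAt (fun x : ℝ => w * exp x) (w * exp x) x :=
      (Real.hasDerivAt_exp x).const_mul w
    have h2 : HasDerivAt (fun x : ℝ => (1 - w) * exp (-x)) ((1 - w) * (exp (-x) * (-1))) x := by
      exact (((Real.hasDerivAt_exp (-x)).comp x (hasDerivAt_neg x))).const_mul (1 - w)
    refine HasDerivAt.congr_deriv (h1.add h2) ?_
    simp only [hN₁]; ring
  have hN₁d : ∀ x, HasDerivAt N₁ (N x) x := by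
    intro x
    have h1 : HasDerivAt (fun x : ℝ => w * exp x) (w * exp x) x :=
      (Real.hasDerivAt_exp x).const_mul w
    have h2 : HasDerivAt (fun x : ℝ => (1 - w) * exp (-x)) ((1 - w) * (exp (-x) * (-1))) x := by
      exact (((Real.hasDerivAt_exp (-x)).comp x (hasDerivAt_neg x))).const_mul (1 - w)
    refine HasDerivAt.congr_deriv (h1.sub h2) ?_
    simp only [hN]; ring
  have hDd : ∀ x, HasDerivAt D (D' x) x := by
    intro x
    have hlog : HasDerivAt (fun x => log (N x)) (N₁ x / N x) x := by
      simpa [div_eq_mul_inv, mul_comm] using (hNd x).log (hNpos x).ne'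
    have hpoly : HasDerivAt (fun x : ℝ => (2 * w - 1) * x + x ^ 2 / 2)
        ((2 * w - 1) + x) x := by
      have := ((hasDerivAt_pow 2 x).div_const 2).const_add 0
      have h1 : HasDerivAt (fun x : ℝ => (2 * w - 1) * x) (2 * w - 1) x :=
        (hasDerivAt_id x).const_mul (2 * w - 1) |>.congr_deriv (by ring)
      exact h1.add (by simpa using (hasDerivAt_pow 2 x).div_const 2)
    exact hpoly.sub hlog
  have hD'd : ∀ x, HasDerivAt D' ((N₁ x / N x) ^ 2) x := by
    intro x
    have hdiv : HasDerivAt (fun x => N₁ x / N x)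
        ((N x * N x - N₁ x * N₁ x) / (N x) ^ 2) x := (hN₁d x).div (hNd x) (hNpos x).ne'
    have hpoly : HasDerivAt (fun x : ℝ => (2 * w - 1) + x) 1 x := by
      simpa using (hasDerivAt_id x).const_add (2 * w - 1)
    have key : ∀ a b : ℝ, a ≠ 0 → 1 - (a * a - b * b) / a ^ 2 = (b / a) ^ 2 := by
      intro a b ha; field_simp; ring
    have := hpoly.sub hdiv
    rw [key (N x) (N₁ x) (hNpos x).ne'] at this
    exact this
  have hD'0 : D' 0 = 0 := by
    simp [hD', hN, hN₁]
    ring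
  have hD'mono : Monotone D' := by
    apply monotone_of_deriv_nonneg
    · exact fun x => (hD'd x).differentiableAt
    · intro x
      rw [(hD'd x).deriv]
      positivity
  have hD'nonneg : ∀ x ∈ Set.Ici (0:ℝ), 0 ≤ D' x := by
    intro x hx
    rw [← hD'0]
    exact hD'mono hx
  have hDmono : MonotoneOn D (Set.Ici 0) := by
    apply monotoneOn_of_deriv_nonneg (convex_Ici 0)
    · exact Continuous.continuousOn (continuous_iff_continuousAt.mpr
        fun x => (hDd x).differentiableAt.continuousAt)
    · intro x _
      exact (hDd x).differentiableAt.differentiableWithinAt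
    · intro x hx
      rw [(hDd x).deriv]
      exact hD'nonneg x (le_of_lt (by simpa using hx))
  have hD0 : D 0 = 0 := by simp [hD, hN]
  have hfinal : 0 ≤ D h := by
    rw [← hD0]
    exact hDmono (by simp) (by simpa using hh) hh
  have : log (N h) ≤ (2 * w - 1) * h + h ^ 2 / 2 := by
    simp only [hD] at hfinal; linarith
  calc N h = exp (log (N h)) := (exp_log (hNpos h)).symm
    _ ≤ exp ((2 * w - 1) * h + h ^ 2 / 2) := exp_le_exp.mpr this
section chordgen
variable {A B p t : ℝ}

lemma chord_c0_nonneg (hA : 0 < A) (hAB : A < B) (hp : 1 ≤ p) :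
    0 ≤ (B ^ p - A ^ p) / (B - A) * A - A ^ p := by
  have hB : (0:ℝ) < B := lt_trans hA hAB
  rw [sub_nonneg, div_mul_eq_mul_div, le_div_iff₀ (by linarith)]
  have e1 : A ^ p = A ^ (p - 1) * A := by
    rw [← rpow_add_one hA.ne' (p - 1)]; ring_nf
  have e2 : B ^ p = B ^ (p - 1) * B := by
    rw [← rpow_add_one hB.ne' (p - 1)]; ring_nf
  have h3 : A ^ (p - 1) ≤ B ^ (p - 1) := rpow_le_rpow hA.le hAB.le (by linarith)
  have h4 : (0:ℝ) < A ^ (p-1) := rpow_pos_of_pos hA _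
  have key : A ^ p * B ≤ B ^ p * A := by
    rw [e1, e2]
    nlinarith [mul_nonneg (mul_pos hA hB).le (sub_nonneg.mpr h3)]
  nlinarith [key]

lemma chord_c1_nonneg (hA : 0 < A) (hAB : A < B) (hp : 1 ≤ p) :
    0 ≤ (B ^ p - A ^ p) / (B - A) := by
  apply div_nonneg _ (by linarith)
  have := rpow_le_rpow hA.le hAB.le (by linarith : (0:ℝ) ≤ p)
  linarith

lemma chord_ineq_gen (hA : 0 < A) (hAB : A < B) (hp : 1 ≤ p)
    (h1 : A ≤ t) (h2 : t ≤ B) :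
    t ^ p + ((B ^ p - A ^ p) / (B - A) * A - A ^ p) ≤ (B ^ p - A ^ p) / (B - A) * t := by
  have hB : (0:ℝ) < B := lt_trans hA hAB
  have hBA : (0:ℝ) < B - A := by linarith
  have hconv := convexOn_rpow hp
  have hcomb : ((B - t) / (B - A)) * A + (1 - (B - t) / (B - A)) * B = t := by
    field_simp
    ring
  have hθ0 : 0 ≤ (B - t) / (B - A) := div_nonneg (by linarith) hBA.le
  have hθ1 : (B - t) / (B - A) ≤ 1 := by rw [div_le_one hBA]; linarith
  have key := hconv.2 (Set.mem_Ici.mpr hA.le) (Set.mem_Ici.mpr hB.le)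
    hθ0 (by linarith : (0:ℝ) ≤ 1 - (B - t) / (B - A)) (by ring)
  simp only [smul_eq_mul, hcomb] at key
  have hline : ((B - t) / (B - A)) * A ^ p + (1 - (B - t) / (B - A)) * B ^ p
      = (B ^ p - A ^ p) / (B - A) * t - ((B ^ p - A ^ p) / (B - A) * A - A ^ p) := by
    field_simp
    ring
  linarith [hline ▸ key]
end chordgen

/-- the two-point mgf value bound: `c₁ - c₀ ≤ exp(λμ* + λ²ε²/2)`. -/
lemma chord_sum_le {ε lam : ℝ} (hε : 0 < ε) (hlam : 0 ≤ lam) :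
    (exp ε ^ (1+lam) - exp (-ε) ^ (1+lam)) / (exp ε - exp (-ε))
      - ((exp ε ^ (1+lam) - exp (-ε) ^ (1+lam)) / (exp ε - exp (-ε)) * exp (-ε)
          - exp (-ε) ^ (1+lam))
      ≤ exp (lam * (ε * (exp ε - 1) / (exp ε + 1)) + lam ^ 2 * ε ^ 2 / 2) := by
  have hB1 : 1 < exp ε := by rw [← exp_zero]; exact exp_lt_exp.mpr hε
  have hu : exp ε ^ lam = exp (lam * ε) := by
    rw [rpow_def_of_pos (exp_pos ε), log_exp]; ring_nf
  have hv : exp (-ε) ^ lam = exp (-(lam * ε)) := by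
    rw [rpow_def_of_pos (exp_pos (-ε)), log_exp]; ring_nf
  have hpu : exp ε ^ (1+lam) = exp ε * exp (lam * ε) := by
    rw [rpow_add (exp_pos ε), Real.rpow_one, hu]
  have hpv : exp (-ε) ^ (1+lam) = (exp ε)⁻¹ * exp (-(lam * ε)) := by
    rw [rpow_add (exp_pos (-ε)), Real.rpow_one, hv, exp_neg]
  have hAeq : exp (-ε) = (exp ε)⁻¹ := exp_neg ε
  rw [hpu, hpv, hAeq]
  have hgen : ∀ B u v : ℝ, 1 < B →
      (B * u - B⁻¹ * v) / (B - B⁻¹) - ((B * u - B⁻¹ * v) / (B - B⁻¹) * B⁻¹ - B⁻¹ * v) =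
      (B - 1) / (B - B⁻¹) * u + (1 - (B - 1) / (B - B⁻¹)) * v := by
    intro B u v hB
    have hB0 : (0:ℝ) < B := by linarith
    have h2 : B ≠ 0 := hB0.ne'
    have h3 : B^2 - 1 ≠ 0 := by nlinarith
    have key : B - B⁻¹ = (B^2 - 1)/B := by field_simp
    rw [key]
    simp only [div_div_div_eq, div_div_eq_mul_div, div_mul_eq_mul_div]
    field_simp
    ring
  rw [hgen (exp ε) (exp (lam*ε)) (exp (-(lam*ε))) hB1]
  have hB0 : (0:ℝ) < exp ε := exp_pos ε
  have hBinv : (exp ε)⁻¹ < 1 := by rw [inv_lt_one_iff₀]; right; exact hB1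
  have hBB : (0:ℝ) < exp ε - (exp ε)⁻¹ := by nlinarith [inv_pos.mpr hB0]
  have hw0 : 0 ≤ (exp ε - 1)/(exp ε - (exp ε)⁻¹) := div_nonneg (by linarith) hBB.le
  have hw1 : (exp ε - 1)/(exp ε - (exp ε)⁻¹) ≤ 1 := by
    rw [div_le_one hBB]; nlinarith [inv_pos.mpr hB0]
  have hmean : (2 * ((exp ε - 1)/(exp ε - (exp ε)⁻¹)) - 1) * (lam * ε)
      = lam * (ε * (exp ε - 1) / (exp ε + 1)) := by
    have h2 : exp ε ≠ 0 := hB0.ne'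
    have h3 : (exp ε)^2 - 1 ≠ 0 := by nlinarith
    have key : exp ε - (exp ε)⁻¹ = ((exp ε)^2 - 1)/(exp ε) := by field_simp
    have h4 : 2 * ((exp ε - 1)/(exp ε - (exp ε)⁻¹)) - 1 = (exp ε - 1) / (exp ε + 1) := by
      rw [key]
      field_simp
      ring
    rw [h4]; ring
  have := hoeff_two_point hw0 hw1 (mul_nonneg hlam hε.le)
  rw [hmean] at this
  calc (exp ε - 1)/(exp ε - (exp ε)⁻¹) * exp (lam * ε)
        + (1 - (exp ε - 1)/(exp ε - (exp ε)⁻¹)) * exp (-(lam * ε))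
      ≤ exp (lam * (ε * (exp ε - 1) / (exp ε + 1)) + (lam * ε) ^ 2 / 2) := this
    _ = exp (lam * (ε * (exp ε - 1) / (exp ε + 1)) + lam ^ 2 * ε ^ 2 / 2) := by ring_nf

lemma prod_le_prod_add_sum {ι : Type*} [DecidableEq ι] (s : Finset ι) (p m u : ι → ℝ≥0∞)
    (h : ∀ i, p i ≤ m i + u i) :
    ∏ i ∈ s, p i ≤ ∏ i ∈ s, m i + ∑ i ∈ s, u i * ∏ j ∈ s.erase i, (m j + u j) := by
  induction s using Finset.induction_on with
  | empty => simp
  | insert a s ha ih =>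
    rw [Finset.prod_insert ha, Finset.prod_insert ha, Finset.sum_insert ha,
      Finset.erase_insert ha]
    have step1 : p a * ∏ i ∈ s, p i ≤ m a * ∏ i ∈ s, p i + u a * ∏ j ∈ s, (m j + u j) := by
      calc p a * ∏ i ∈ s, p i ≤ (m a + u a) * ∏ i ∈ s, p i := mul_le_mul_left (h a) _
        _ = m a * ∏ i ∈ s, p i + u a * ∏ i ∈ s, p i := add_mul _ _ _
        _ ≤ m a * ∏ i ∈ s, p i + u a * ∏ j ∈ s, (m j + u j) := by
            exact add_le_add_right (mul_le_mul_right (Finset.prod_le_prod' fun j _ => h j) _) _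
    have step2 : m a * ∏ i ∈ s, p i
        ≤ m a * ∏ i ∈ s, m i + ∑ i ∈ s, u i * ∏ j ∈ (insert a s).erase i, (m j + u j) := by
      calc m a * ∏ i ∈ s, p i
          ≤ m a * (∏ i ∈ s, m i + ∑ i ∈ s, u i * ∏ j ∈ s.erase i, (m j + u j)) :=
            mul_le_mul_right ih _
        _ = m a * ∏ i ∈ s, m i + ∑ i ∈ s, m a * (u i * ∏ j ∈ s.erase i, (m j + u j)) := by
            rw [mul_add, Finset.mul_sum]
        _ ≤ m a * ∏ i ∈ s, m i + ∑ i ∈ s, u i * ∏ j ∈ (insert a s).erase i, (m j + u j) := by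
            apply add_le_add_right
            apply Finset.sum_le_sum
            intro i hi
            have hne : a ≠ i := fun hai => ha (hai ▸ hi)
            have herase : (insert a s).erase i = insert a (s.erase i) :=
              Finset.erase_insert_of_ne hne
            have hnotmem : a ∉ s.erase i := fun hmem => ha (Finset.mem_of_mem_erase hmem)
            rw [herase, Finset.prod_insert hnotmem, ← mul_assoc, mul_comm (m a) (u i), mul_assoc]
            exact mul_le_mul_right (mul_le_mul_left (le_add_right le_rfl) _) _
    calc p a * ∏ i ∈ s, p i
        ≤ m a * ∏ i ∈ s, p i + u a * ∏ j ∈ s, (m j + u j) := step1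
      _ ≤ (m a * ∏ i ∈ s, m i + ∑ i ∈ s, u i * ∏ j ∈ (insert a s).erase i, (m j + u j))
          + u a * ∏ j ∈ s, (m j + u j) := add_le_add_left step2 _
      _ = m a * ∏ i ∈ s, m i + (u a * ∏ j ∈ s, (m j + u j)
          + ∑ i ∈ s, u i * ∏ j ∈ (insert a s).erase i, (m j + u j)) := by ring
  
lemma lmarginal_prod {ι : Type*} [Fintype ι] [DecidableEq ι] {Y : ι → Type*}
    [∀ i, MeasurableSpace (Y i)] (μ : ∀ i, Measure (Y i)) [∀ i, SigmaFinite (μ i)]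
    (f : ∀ i, Y i → ℝ≥0∞) (hf : ∀ i, Measurable (f i)) (s : Finset ι) (x : ∀ i, Y i) :
    (∫⋯∫⁻_s, (fun y => ∏ i, f i (y i)) ∂μ) x
      = (∏ i ∈ s, ∫⁻ t, f i t ∂μ i) * ∏ i ∈ sᶜ, f i (x i) := by
  induction s using Finset.induction_on generalizing x with
  | empty => simp [MeasureTheory.lmarginal_empty]
  | insert a s ha ih =>
    have hmeas : Measurable (fun y : ∀ i, Y i => ∏ i, f i (y i)) :=
      Finset.measurable_prod _ fun i _ => (hf i).comp (measurable_pi_apply i)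
    rw [MeasureTheory.lmarginal_insert _ hmeas ha]
    simp_rw [ih]
    have hac : a ∈ sᶜ := Finset.mem_compl.mpr ha
    have step : ∀ xᵢ : Y a, ∏ i ∈ sᶜ, f i (Function.update x a xᵢ i)
        = f a xᵢ * ∏ i ∈ sᶜ.erase a, f i (x i) := by
      intro xᵢ
      rw [← Finset.mul_prod_erase _ _ hac, Function.update_self]
      congr 1
      apply Finset.prod_congr rfl
      intro i hi
      rw [Function.update_of_ne (Finset.ne_of_mem_erase hi)]
    simp_rw [step]
    have rearr : ∀ xᵢ : Y a, (∏ i ∈ s, ∫⁻ t, f i t ∂μ i) * (f a xᵢ * ∏ i ∈ sᶜ.erase a, f i (x i))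
        = f a xᵢ * ((∏ i ∈ s, ∫⁻ t, f i t ∂μ i) * ∏ i ∈ sᶜ.erase a, f i (x i)) := fun _ => by ring
    simp_rw [rearr]
    rw [lintegral_mul_const _ (hf a), Finset.prod_insert ha, Finset.compl_insert]
    ring

lemma lintegral_pi_prod {ι : Type*} [Fintype ι] [DecidableEq ι] {Y : ι → Type*}
    [∀ i, MeasurableSpace (Y i)] (μ : ∀ i, Measure (Y i)) [∀ i, SigmaFinite (μ i)]
    (f : ∀ i, Y i → ℝ≥0∞) (hf : ∀ i, Measurable (f i)) (x : ∀ i, Y i) :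
    ∫⁻ y, ∏ i, f i (y i) ∂Measure.pi μ = ∏ i, ∫⁻ t, f i t ∂μ i := by
  rw [MeasureTheory.lintegral_eq_lmarginal_univ x, lmarginal_prod μ f hf Finset.univ x]
  simp

lemma pi_withDensity {ι : Type*} [Fintype ι] [DecidableEq ι] {Y : ι → Type*}
    [∀ i, MeasurableSpace (Y i)] (μ : ∀ i, Measure (Y i)) [∀ i, SigmaFinite (μ i)]
    (f : ∀ i, Y i → ℝ≥0∞) (hf : ∀ i, Measurable (f i))
    [∀ i, SigmaFinite ((μ i).withDensity (f i))] (x : ∀ i, Y i) :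
    Measure.pi (fun i => (μ i).withDensity (f i))
      = (Measure.pi μ).withDensity (fun y => ∏ i, f i (y i)) := by
  apply Measure.pi_eq
  intro s hs
  rw [withDensity_apply _ (MeasurableSet.univ_pi hs)]
  have key : ∫⁻ y in Set.pi Set.univ s, ∏ i, f i (y i) ∂Measure.pi μ
      = ∫⁻ y, ∏ i, (s i).indicator (f i) (y i) ∂Measure.pi μ := by
    rw [← lintegral_indicator (MeasurableSet.univ_pi hs)]
    congr 1
    ext y
    by_cases hy : y ∈ Set.pi Set.univ s
    · rw [Set.indicator_of_mem hy]
      exact Finset.prod_congr rfl fun i _ => (Set.indicator_of_mem (hy i trivial) _).symm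
    · rw [Set.indicator_of_notMem hy]
      have hex : ∃ i, y i ∉ s i := by
        by_contra hcon
        push_neg at hcon
        exact hy fun i _ => hcon i
      obtain ⟨i, hyi⟩ := hex
      exact (Finset.prod_eq_zero (Finset.mem_univ i)
        (by rw [Set.indicator_of_notMem hyi])).symm
  rw [key, lintegral_pi_prod μ _ (fun i => (hf i).indicator (hs i)) x]
  exact Finset.prod_congr rfl fun i _ =>
    (lintegral_indicator (hs i) _).trans (withDensity_apply _ (hs i)).symm

section decomp
variable {Z : Type*} [MeasurableSpace Z]

/-- Excess mass bound from (ε,δ)-DP. -/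
lemma excess_le (μ : Measure Z) [IsFiniteMeasure μ] (F G : Measure Z)
    [IsProbabilityMeasure F] [IsProbabilityMeasure G]
    (f g : Z → ℝ≥0∞) (hf : Measurable f) (hg : Measurable g)
    (hF : μ.withDensity f = F) (hG : μ.withDensity g = G) (ε δ : ℝ) (hδ : 0 ≤ δ)
    (hdp : ∀ E : Set Z, MeasurableSet E → (F E).toReal ≤ Real.exp ε * (G E).toReal + δ) :
    ∫⁻ y, (f y - ENNReal.ofReal (Real.exp ε) * g y) ∂μ ≤ ENNReal.ofReal δ := by
  set B' := ENNReal.ofReal (Real.exp ε) with hB'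
  set T : Set Z := {y | B' * g y < f y} with hT
  have hTm : MeasurableSet T := measurableSet_lt (hg.const_mul B') hf
  have hind : ∀ y, f y - B' * g y = T.indicator (fun y => f y - B' * g y) y := by
    intro y
    by_cases hy : y ∈ T
    · rw [Set.indicator_of_mem hy]
    · rw [Set.indicator_of_notMem hy]
      have : f y ≤ B' * g y := not_lt.mp hy
      exact tsub_eq_zero_of_le this
  calc ∫⁻ y, (f y - B' * g y) ∂μ
      = ∫⁻ y in T, (f y - B' * g y) ∂μ := by
        rw [lintegral_congr hind, lintegral_indicator hTm]
    _ = (∫⁻ y in T, f y ∂μ) - ∫⁻ y in T, B' * g y ∂μ := by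
        apply lintegral_sub (hg.const_mul B')
        · have : ∫⁻ y in T, B' * g y ∂μ ≤ B' * ∫⁻ y, g y ∂μ := by
            rw [lintegral_const_mul _ hg]
            exact mul_le_mul_right (setLIntegral_le_lintegral _ _) _
          refine ne_top_of_le_ne_top ?_ this
          have : ∫⁻ y, g y ∂μ = 1 := by
            have h2 := withDensity_apply (μ := μ) g (MeasurableSet.univ (α := Z))
            rw [hG, Measure.restrict_univ] at h2
            rw [← h2, measure_univ]
          rw [this, mul_one]
          exact ENNReal.ofReal_ne_top
        · filter_upwards [ae_restrict_mem hTm] with y hy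
          exact (le_of_lt hy)
    _ = F T - B' * G T := by
        rw [← hF, ← hG, withDensity_apply _ hTm, withDensity_apply _ hTm,
          lintegral_const_mul _ hg]
    _ ≤ ENNReal.ofReal δ := by
        rw [tsub_le_iff_right]
        have h1 : (F T).toReal ≤ Real.exp ε * (G T).toReal + δ := hdp T hTm
        have hFfin : F T ≠ ∞ := measure_ne_top F T
        have hGfin : G T ≠ ∞ := measure_ne_top G T
        calc F T = ENNReal.ofReal ((F T).toReal) := (ENNReal.ofReal_toReal hFfin).symm
          _ ≤ ENNReal.ofReal (δ + Real.exp ε * (G T).toReal) :=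
              ENNReal.ofReal_le_ofReal (by linarith)
          _ = ENNReal.ofReal δ + ENNReal.ofReal (Real.exp ε * (G T).toReal) := by
              rw [ENNReal.ofReal_add hδ (by positivity)]
          _ = ENNReal.ofReal δ + B' * G T := by
              rw [ENNReal.ofReal_mul (exp_pos ε).le, ENNReal.ofReal_toReal hGfin]

structure DPDecomp (P Q : Measure Z) (ε δ : ℝ) : Type _ where
  p : Z → ℝ≥0∞
  q : Z → ℝ≥0∞
  mt : Z → ℝ≥0∞
  qt : Z → ℝ≥0∞
  u : Z → ℝ≥0∞
  r : Z → ℝ≥0∞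
  meas_p : Measurable p
  meas_q : Measurable q
  meas_mt : Measurable mt
  meas_qt : Measurable qt
  meas_u : Measurable u
  meas_r : Measurable r
  hP : (P + Q).withDensity p = P
  hQ : (P + Q).withDensity q = Q
  hpmu : ∀ y, p y ≤ mt y + u y
  hqtq : ∀ y, qt y ≤ q y
  hmr : ∀ y, mt y = r y * qt y
  hr_lb : ∀ y, ENNReal.ofReal (Real.exp (-ε)) ≤ r y
  hr_ub : ∀ y, r y ≤ ENNReal.ofReal (Real.exp ε)
  hu_int : ∫⁻ y, u y ∂(P + Q) ≤ ENNReal.ofReal δ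
  hm_le_q : ∫⁻ y, mt y ∂(P + Q) ≤ ∫⁻ y, qt y ∂(P + Q)
  hmu1 : (∫⁻ y, mt y ∂(P + Q)) + ∫⁻ y, u y ∂(P + Q) ≤ 1
  hqt1 : ∫⁻ y, qt y ∂(P + Q) ≤ 1

lemma dpdecomp_exists (P Q : Measure Z) [IsProbabilityMeasure P] [IsProbabilityMeasure Q]
    (ε δ : ℝ) (hε : 0 < ε) (hδ : 0 ≤ δ)
    (hPQ : ∀ E : Set Z, MeasurableSet E → (P E).toReal ≤ Real.exp ε * (Q E).toReal + δ)
    (hQP : ∀ E : Set Z, MeasurableSet E → (Q E).toReal ≤ Real.exp ε * (P E).toReal + δ) :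
    Nonempty (DPDecomp P Q ε δ) := by
  set μ := P + Q with hμdef
  have hPle : P ≪ μ := Measure.absolutelyContinuous_of_le (Measure.le_add_right le_rfl)
  have hQle : Q ≪ μ := Measure.absolutelyContinuous_of_le (Measure.le_add_left le_rfl)
  have hmk : ∀ (F : Measure Z), F ≪ μ → SigmaFinite F → ∃ f : Z → ℝ≥0∞,
      Measurable f ∧ (∀ y, f y ≠ ∞) ∧ μ.withDensity f = F := by
    intro F hF hsf
    refine ⟨fun y => if F.rnDeriv μ y = ∞ then 0 else F.rnDeriv μ y, ?_, ?_, ?_⟩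
    · exact Measurable.ite ((F.measurable_rnDeriv μ) (measurableSet_singleton ∞))
        measurable_const (F.measurable_rnDeriv μ)
    · intro y; dsimp only; split
      · simp
      · assumption
    · have hae : (fun y => if F.rnDeriv μ y = ∞ then 0 else F.rnDeriv μ y) =ᵐ[μ]
          F.rnDeriv μ := by
        filter_upwards [Measure.rnDeriv_lt_top F μ] with y hy
        simp [hy.ne]
      rw [withDensity_congr_ae hae]
      exact Measure.withDensity_rnDeriv_eq F μ hF
  obtain ⟨p, hpm, hpfin, hp⟩ := hmk P hPle inferInstance
  obtain ⟨q, hqm, hqfin, hq⟩ := hmk Q hQle inferInstance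
  have hip : ∫⁻ y, p y ∂μ = 1 := by
    have h2 := withDensity_apply (μ := μ) p (MeasurableSet.univ (α := Z))
    rw [hp, Measure.restrict_univ] at h2
    rw [← h2, measure_univ]
  have hiq : ∫⁻ y, q y ∂μ = 1 := by
    have h2 := withDensity_apply (μ := μ) q (MeasurableSet.univ (α := Z))
    rw [hq, Measure.restrict_univ] at h2
    rw [← h2, measure_univ]
  set B' := ENNReal.ofReal (Real.exp ε) with hB'def
  set A' := ENNReal.ofReal (Real.exp (-ε)) with hA'def
  have hB'top : B' ≠ ∞ := ENNReal.ofReal_ne_top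
  have hA'B' : A' * B' = 1 := by
    rw [hA'def, hB'def, ← ENNReal.ofReal_mul (exp_pos _).le, ← Real.exp_add]
    simp
  have h1B' : 1 ≤ B' := ENNReal.one_le_ofReal.mpr (Real.one_le_exp hε.le)
  have hA'B'le : A' ≤ B' := ENNReal.ofReal_le_ofReal (exp_le_exp.mpr (by linarith))
  set qt : Z → ℝ≥0∞ := fun y => min (q y) (B' * p y) with hqtdef
  set m0 : Z → ℝ≥0∞ := fun y => min (p y) (B' * qt y) with hm0def
  set u0 : Z → ℝ≥0∞ := fun y => p y - m0 y with hu0def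
  have hqtm : Measurable qt := hqm.min (hpm.const_mul B')
  have hm0m : Measurable m0 := hpm.min (hqtm.const_mul B')
  have hu0m : Measurable u0 := hpm.sub hm0m
  have hqtfin : ∀ y, qt y ≠ ∞ := fun y => ne_top_of_le_ne_top (hqfin y) (min_le_left _ _)
  have hqtq : ∀ y, qt y ≤ q y := fun y => min_le_left _ _
  have hm0p : ∀ y, m0 y ≤ p y := fun y => min_le_left _ _
  have hm0B : ∀ y, m0 y ≤ B' * qt y := fun y => min_le_right _ _
  have hpm0u0 : ∀ y, p y = m0 y + u0 y := fun y => (add_tsub_cancel_of_le (hm0p y)).symm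
  -- u0 equals the one-sided excess (p - B' q)
  have hu0eq : ∀ y, u0 y = p y - B' * q y := by
    intro y
    by_cases hc : q y ≤ B' * p y
    · have hqtv : qt y = q y := min_eq_left hc
      rw [hu0def]; dsimp only
      rw [hm0def]; dsimp only
      rw [hqtv]
      rcases le_total (p y) (B' * q y) with h | h
      · rw [min_eq_left h, tsub_eq_zero_of_le le_rfl, tsub_eq_zero_of_le h]
      · rw [min_eq_right h]
    · push_neg at hc
      have hqtv : qt y = B' * p y := min_eq_right hc.le
      have h2 : p y ≤ B' * qt y := by
        rw [hqtv]
        calc p y ≤ B' * p y := le_mul_of_one_le_left' h1B'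
          _ ≤ B' * (B' * p y) := le_mul_of_one_le_left' h1B'
      have hm0v : m0 y = p y := min_eq_left h2
      have hple : p y ≤ B' * q y :=
        le_trans (le_mul_of_one_le_left' h1B') (hc.le.trans (le_mul_of_one_le_left' h1B'))
      rw [hu0def]; dsimp only
      rw [hm0v, tsub_eq_zero_of_le le_rfl, tsub_eq_zero_of_le hple]
  have hq_qt : ∀ y, q y = qt y + (q y - B' * p y) := by
    intro y
    by_cases hc : q y ≤ B' * p y
    · rw [hqtdef]; dsimp only
      rw [min_eq_left hc, tsub_eq_zero_of_le hc, add_zero]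
    · push_neg at hc
      rw [hqtdef]; dsimp only
      rw [min_eq_right hc.le, add_tsub_cancel_of_le hc.le]
  have hAqt_m0 : ∀ y, A' * qt y ≤ m0 y := by
    intro y
    by_cases hc : q y ≤ B' * p y
    · have hqtv : qt y = q y := min_eq_left hc
      rw [hqtv, hm0def]; dsimp only
      rw [hqtv]
      refine le_min ?_ (mul_le_mul_left hA'B'le _)
      calc A' * q y ≤ A' * (B' * p y) := mul_le_mul_right hc _
        _ = (A' * B') * p y := by ring
        _ = p y := by rw [hA'B', one_mul]
    · push_neg at hc
      have hqtv : qt y = B' * p y := min_eq_right hc.le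
      have h2 : p y ≤ B' * qt y := by
        rw [hqtv]
        calc p y ≤ B' * p y := le_mul_of_one_le_left' h1B'
          _ ≤ B' * (B' * p y) := le_mul_of_one_le_left' h1B'
      have hm0v : m0 y = p y := min_eq_left h2
      rw [hqtv, hm0v]
      have heq : A' * (B' * p y) = p y := by rw [← mul_assoc, hA'B', one_mul]
      exact heq.le
  -- integral quantities
  set Vm0 := ∫⁻ y, m0 y ∂μ with hVm0def
  set Vqt := ∫⁻ y, qt y ∂μ with hVqtdef
  set aE := ∫⁻ y, u0 y ∂μ with haEdef
  set bE := ∫⁻ y, (q y - B' * p y) ∂μ with hbEdef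
  have hVqt1 : Vqt ≤ 1 := by
    rw [hVqtdef, ← hiq]
    exact lintegral_mono hqtq
  have hVm01 : Vm0 ≤ 1 := by
    rw [hVm0def, ← hip]
    exact lintegral_mono hm0p
  have hsum_m : Vm0 + aE = 1 := by
    rw [hVm0def, haEdef, ← lintegral_add_left hm0m, ← hip]
    exact lintegral_congr fun y => (hpm0u0 y).symm
  have hsum_q : Vqt + bE = 1 := by
    rw [hVqtdef, hbEdef, ← lintegral_add_left hqtm, ← hiq]
    exact lintegral_congr fun y => (hq_qt y).symm
  have haE1 : aE ≠ ∞ := by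
    refine ne_top_of_le_ne_top (by simp : (1:ℝ≥0∞) ≠ ∞) ?_
    calc aE ≤ Vm0 + aE := le_add_self
      _ = 1 := hsum_m
  have hbE1 : bE ≠ ∞ := by
    refine ne_top_of_le_ne_top (by simp : (1:ℝ≥0∞) ≠ ∞) ?_
    calc bE ≤ Vqt + bE := le_add_self
      _ = 1 := hsum_q
  have hVm0fin : Vm0 ≠ ∞ := ne_top_of_le_ne_top (by simp) hVm01
  have hVqtfin : Vqt ≠ ∞ := ne_top_of_le_ne_top (by simp) hVqt1
  have ha : aE ≤ ENNReal.ofReal δ := by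
    rw [haEdef]
    calc ∫⁻ y, u0 y ∂μ = ∫⁻ y, (p y - B' * q y) ∂μ := lintegral_congr hu0eq
      _ ≤ ENNReal.ofReal δ := excess_le μ P Q p q hpm hqm hp hq ε δ hδ hPQ
  have hb : bE ≤ ENNReal.ofReal δ := excess_le μ Q P q p hqm hpm hq hp ε δ hδ hQP
  have hAV : A' * Vqt ≤ Vm0 := by
    rw [hVqtdef, hVm0def, ← lintegral_const_mul _ hqtm]
    exact lintegral_mono hAqt_m0
  -- main construction of mt, u
  have main : ∃ mt u : Z → ℝ≥0∞, Measurable mt ∧ Measurable u ∧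
      (∀ y, p y ≤ mt y + u y) ∧ (∀ y, A' * qt y ≤ mt y) ∧ (∀ y, mt y ≤ B' * qt y) ∧
      (∫⁻ y, u y ∂μ ≤ ENNReal.ofReal δ) ∧ (∫⁻ y, mt y ∂μ ≤ Vqt) ∧
      ((∫⁻ y, mt y ∂μ) + ∫⁻ y, u y ∂μ ≤ 1) := by
    by_cases hcase : bE ≤ aE
    · refine ⟨m0, u0, hm0m, hu0m, fun y => (hpm0u0 y).le, hAqt_m0, hm0B, ha, ?_, ?_⟩
      · have h1 : Vm0 + bE ≤ Vm0 + aE := add_le_add_right hcase _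
        rw [hsum_m, ← hsum_q] at h1
        exact (ENNReal.add_le_add_iff_right hbE1).mp h1
      · rw [hsum_m]
    · push_neg at hcase
      -- real bookkeeping
      set a := aE.toReal with hadef
      set b := bE.toReal with hbdef
      set Mr := Vm0.toReal with hMdef
      set Vr := Vqt.toReal with hVdef
      set Ar := Real.exp (-ε) with hArdef
      have hab : a < b := by
        rw [hadef, hbdef]
        exact (ENNReal.toReal_lt_toReal haE1 hbE1).mpr hcase
      have hMa : Mr + a = 1 := by
        rw [hMdef, hadef, ← ENNReal.toReal_add hVm0fin haE1, hsum_m, ENNReal.toReal_one]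
      have hVb : Vr + b = 1 := by
        rw [hVdef, hbdef, ← ENNReal.toReal_add hVqtfin hbE1, hsum_q, ENNReal.toReal_one]
      have hb1 : b ≤ 1 := by
        have : (0:ℝ) ≤ Vr := ENNReal.toReal_nonneg
        linarith
      have ha0 : 0 ≤ a := ENNReal.toReal_nonneg
      have hAr1 : Ar ≤ 1 := Real.exp_le_one_iff.mpr (by linarith)
      have hAr0 : 0 < Ar := exp_pos _
      have hAVr : Ar * Vr ≤ Mr := by
        have h1 := (ENNReal.toReal_le_toReal (by
            exact ENNReal.mul_ne_top ENNReal.ofReal_ne_top hVqtfin) hVm0fin).mpr hAV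
        rw [ENNReal.toReal_mul, ENNReal.toReal_ofReal hAr0.le] at h1
        exact h1
      set room := Mr - Ar * Vr with hroomdef
      have hroom : b - a ≤ room := by
        have h0 : (0:ℝ) ≤ (1 - b) * (1 - Ar) :=
          mul_nonneg (by linarith) (by linarith)
        rw [hroomdef]
        nlinarith
      have hroom_pos : 0 < room := lt_of_lt_of_le (by linarith) hroom
      set c := (b - a) / room with hcdef
      have hc0 : 0 ≤ c := div_nonneg (by linarith) hroom_pos.le
      have hc1 : c ≤ 1 := (div_le_one hroom_pos).mpr hroom
      have hcroom : c * room = b - a := div_mul_cancel₀ _ hroom_pos.ne'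
      set C' := ENNReal.ofReal c with hC'def
      set D' := ENNReal.ofReal (1 - c) with hD'def
      have hCD : D' + C' = 1 := by
        rw [hD'def, hC'def, ← ENNReal.ofReal_add (by linarith) hc0]
        norm_num
      set mt : Z → ℝ≥0∞ := fun y => D' * m0 y + C' * (A' * qt y) with hmtdef
      set u : Z → ℝ≥0∞ := fun y => u0 y + C' * (m0 y - A' * qt y) with hudef
      have hmtm : Measurable mt := (hm0m.const_mul D').add ((hqtm.const_mul A').const_mul C')
      have hum : Measurable u := hu0m.add ((hm0m.sub (hqtm.const_mul A')).const_mul C')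
      have hVmt : ∫⁻ y, mt y ∂μ = D' * Vm0 + C' * (A' * Vqt) := by
        rw [hmtdef]
        dsimp only
        rw [lintegral_add_left (hm0m.const_mul D'), lintegral_const_mul _ hm0m,
          lintegral_const_mul _ (hqtm.const_mul A'), lintegral_const_mul _ hqtm]
      have hVsub : ∫⁻ y, (m0 y - A' * qt y) ∂μ = Vm0 - A' * Vqt := by
        rw [hVm0def]
        rw [lintegral_sub (hqtm.const_mul A') (by
          rw [lintegral_const_mul _ hqtm]
          exact ENNReal.mul_ne_top ENNReal.ofReal_ne_top hVqtfin)
          (Filter.Eventually.of_forall hAqt_m0)]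
        rw [lintegral_const_mul _ hqtm]
      have hVu : ∫⁻ y, u y ∂μ = aE + C' * (Vm0 - A' * Vqt) := by
        rw [hudef]
        dsimp only
        rw [lintegral_add_left hu0m, lintegral_const_mul (f := fun y => m0 y - A' * qt y) _ (hm0m.sub (hqtm.const_mul A')),
          hVsub]
      have hmtfin : D' * Vm0 + C' * (A' * Vqt) ≠ ∞ := by
        apply ENNReal.add_ne_top.mpr
        constructor
        · exact ENNReal.mul_ne_top ENNReal.ofReal_ne_top hVm0fin
        · exact ENNReal.mul_ne_top ENNReal.ofReal_ne_top
            (ENNReal.mul_ne_top ENNReal.ofReal_ne_top hVqtfin)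
      have goal_u : ∫⁻ y, u y ∂μ ≤ ENNReal.ofReal δ := by
        rw [hVu]
        have hsub_fin : Vm0 - A' * Vqt ≠ ∞ := ne_top_of_le_ne_top hVm0fin tsub_le_self
        have hsplit : C' * (Vm0 - A' * Vqt) = ENNReal.ofReal (c * room) := by
          rw [hC'def, ← ENNReal.ofReal_toReal hsub_fin, ← ENNReal.ofReal_mul hc0]
          congr 1
          rw [ENNReal.toReal_sub_of_le hAV hVm0fin, ENNReal.toReal_mul,
            hA'def, ENNReal.toReal_ofReal hAr0.le]
        rw [hsplit, hcroom]
        calc aE + ENNReal.ofReal (b - a)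
            ≤ ENNReal.ofReal a + ENNReal.ofReal (b - a) := by
              gcongr
              rw [hadef, ENNReal.ofReal_toReal haE1]
          _ = ENNReal.ofReal b := by
              rw [← ENNReal.ofReal_add ha0 (by linarith)]
              ring_nf
          _ ≤ ENNReal.ofReal δ := by
              have : ENNReal.ofReal b = bE := by rw [hbdef]; exact ENNReal.ofReal_toReal hbE1
              rw [this]
              exact hb
      have goal_m : ∫⁻ y, mt y ∂μ ≤ Vqt := by
        rw [hVmt]
        refine (ENNReal.toReal_le_toReal hmtfin hVqtfin).mp ?_
        have eD : D'.toReal = 1 - c := by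
          rw [hD'def]; exact ENNReal.toReal_ofReal (by linarith)
        have eC : C'.toReal = c := by
          rw [hC'def]; exact ENNReal.toReal_ofReal hc0
        have eA : A'.toReal = Ar := by
          rw [hA'def]; exact ENNReal.toReal_ofReal hAr0.le
        have hDfin : D' ≠ ∞ := by rw [hD'def]; exact ENNReal.ofReal_ne_top
        have hCfin : C' ≠ ∞ := by rw [hC'def]; exact ENNReal.ofReal_ne_top
        have hAfin : A' ≠ ∞ := by rw [hA'def]; exact ENNReal.ofReal_ne_top
        rw [ENNReal.toReal_add (ENNReal.mul_ne_top hDfin hVm0fin)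
          (ENNReal.mul_ne_top hCfin (ENNReal.mul_ne_top hAfin hVqtfin)),
          ENNReal.toReal_mul, ENNReal.toReal_mul, ENNReal.toReal_mul, eD, eC, eA]
        have hkey : (1 - c) * Vm0.toReal + c * (Ar * Vqt.toReal) = Mr - c * room := by
          rw [hroomdef, hMdef, hVdef]; ring
        rw [hkey, hcroom]
        have hVrr : Vqt.toReal = Vr := rfl
        rw [hVrr]
        linarith
      have goal_1 : (∫⁻ y, mt y ∂μ) + ∫⁻ y, u y ∂μ ≤ 1 := by
        rw [hVmt, hVu]
        apply le_of_eq
        have hkey : C' * (A' * Vqt) + C' * (Vm0 - A' * Vqt) = C' * Vm0 := by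
          rw [← mul_add, add_tsub_cancel_of_le hAV]
        calc D' * Vm0 + C' * (A' * Vqt) + (aE + C' * (Vm0 - A' * Vqt))
            = D' * Vm0 + (C' * (A' * Vqt) + C' * (Vm0 - A' * Vqt)) + aE := by ring
          _ = D' * Vm0 + C' * Vm0 + aE := by rw [hkey]
          _ = (D' + C') * Vm0 + aE := by ring
          _ = Vm0 + aE := by rw [hCD, one_mul]
          _ = 1 := hsum_m
      refine ⟨mt, u, hmtm, hum, ?_, ?_, ?_, goal_u, goal_m, goal_1⟩
      · intro y
        apply le_of_eq
        calc p y = m0 y + u0 y := hpm0u0 y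
          _ = (D' + C') * m0 y + u0 y := by rw [hCD, one_mul]
          _ = D' * m0 y + C' * (A' * qt y + (m0 y - A' * qt y)) + u0 y := by
              rw [add_tsub_cancel_of_le (hAqt_m0 y)]; ring
          _ = mt y + u y := by simp only [hmtdef, hudef]; ring
      · intro y
        calc A' * qt y = (D' + C') * (A' * qt y) := by rw [hCD, one_mul]
          _ = D' * (A' * qt y) + C' * (A' * qt y) := by ring
          _ ≤ D' * m0 y + C' * (A' * qt y) := by
              gcongr
              exact hAqt_m0 y
      · intro y
        calc mt y = D' * m0 y + C' * (A' * qt y) := rfl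
          _ ≤ D' * (B' * qt y) + C' * (B' * qt y) :=
              add_le_add (mul_le_mul_right (hm0B y) _)
                (mul_le_mul_right (mul_le_mul_left hA'B'le _) _)
          _ = (D' + C') * (B' * qt y) := by ring
          _ = B' * qt y := by rw [hCD, one_mul]
  obtain ⟨mt, u, hmtm, hum, hpmu, hAqt_mt, hmtB, hu_int, hm_le_q, hmu1⟩ := main
  -- construct the ratio function r
  set r : Z → ℝ≥0∞ := fun y => if qt y = 0 then 1 else mt y / qt y with hrdef
  have hrm : Measurable r := by
    apply Measurable.ite (hqtm (measurableSet_singleton 0)) measurable_const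
    exact hmtm.div hqtm
  have hmr : ∀ y, mt y = r y * qt y := by
    intro y
    rw [hrdef]; dsimp only
    by_cases h0 : qt y = 0
    · rw [if_pos h0, h0, mul_zero]
      have := hmtB y
      rw [h0, mul_zero] at this
      exact le_antisymm this zero_le
    · rw [if_neg h0, ENNReal.div_mul_cancel h0 (hqtfin y)]
  have hr_lb : ∀ y, A' ≤ r y := by
    intro y
    rw [hrdef]; dsimp only
    by_cases h0 : qt y = 0
    · rw [if_pos h0]
      exact ENNReal.ofReal_le_one.mpr (Real.exp_le_one_iff.mpr (by linarith))
    · rw [if_neg h0, ENNReal.le_div_iff_mul_le (Or.inl h0) (Or.inl (hqtfin y))]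
      exact hAqt_mt y
  have hr_ub : ∀ y, r y ≤ B' := by
    intro y
    rw [hrdef]; dsimp only
    by_cases h0 : qt y = 0
    · rw [if_pos h0]; exact h1B'
    · rw [if_neg h0, ENNReal.div_le_iff_le_mul (Or.inl h0) (Or.inl (hqtfin y))]
      exact hmtB y
  exact ⟨⟨p, q, mt, qt, u, r, hpm, hqm, hmtm, hqtm, hum, hrm, hp, hq, hpmu, hqtq, hmr,
    hr_lb, hr_ub, hu_int, hm_le_q, hmu1, hVqt1⟩⟩

end decomp
lemma prod_rpow_distrib {ι : Type*} (s : Finset ι) (f : ι → ℝ≥0∞) (t : ℝ)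
    (hf : ∀ i ∈ s, f i ≠ ∞) : (∏ i ∈ s, f i) ^ t = ∏ i ∈ s, (f i) ^ t := by
  classical
  induction s using Finset.induction_on with
  | empty => simp [ENNReal.one_rpow]
  | insert a s ha ih =>
    rw [Finset.prod_insert ha, Finset.prod_insert ha,
      ENNReal.mul_rpow_of_ne_top (hf a (Finset.mem_insert_self a s))
        (ENNReal.prod_lt_top fun i hi => lt_top_iff_ne_top.mpr
          (hf i (Finset.mem_insert_of_mem hi))).ne,
      ih fun i hi => hf i (Finset.mem_insert_of_mem hi)]

/-- advanced composition: If each of `k` independent mechanisms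
`M_1,…,M_k` (viewed as Markov kernels `S ↦ M_i(S)`) is `(ε,δ)`-differentially private
with `ε < 1/√k`, then the composed mechanism `S ↦ (M_1(S),…,M_k(S))` (the product
measure) is `(ε', kδ + δ')`-differentially private, where
`ε' = √(2k·ln(1/δ'))·ε + kε·(e^ε − 1)/(e^ε + 1)`, for every `δ' > 0`. -/
theorem stmt16 {n k : ℕ} {𝒳 : Type*} {Y : Fin k → Type*} [∀ i, MeasurableSpace (Y i)]
    (M : ∀ i : Fin k, (Fin n → 𝒳) → Measure (Y i))
    (hprob : ∀ i S, IsProbabilityMeasure (M i S))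
    (ε δ : ℝ) (hε : 0 < ε) (hδ : 0 ≤ δ) (hεk : ε < 1 / Real.sqrt k)
    (hDP : ∀ i : Fin k, ∀ S S' : Fin n → 𝒳, (∃ j, ∀ i', i' ≠ j → S i' = S' i') →
      ∀ E : Set (Y i), MeasurableSet E →
        (M i S E).toReal ≤ Real.exp ε * (M i S' E).toReal + δ)
    (δ' : ℝ) (hδ' : 0 < δ') :
    ∀ S S' : Fin n → 𝒳, (∃ j, ∀ i', i' ≠ j → S i' = S' i') →
      ∀ E : Set (∀ i, Y i), MeasurableSet E →
        ((Measure.pi fun i => M i S) E).toReal ≤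
          Real.exp (Real.sqrt (2 * k * Real.log (1 / δ')) * ε +
              k * ε * (Real.exp ε - 1) / (Real.exp ε + 1)) *
            ((Measure.pi fun i => M i S') E).toReal + (k * δ + δ') := by
  intro S S' hnb E hE
  haveI hPi : ∀ i, IsProbabilityMeasure (M i S) := fun i => hprob i S
  haveI hQi : ∀ i, IsProbabilityMeasure (M i S') := fun i => hprob i S'
  -- k ≠ 0
  rcases Nat.eq_zero_or_pos k with hk0 | hkpos
  · exfalso
    subst hk0
    norm_num at hεk
    linarith
  have hkR : (0:ℝ) < k := Nat.cast_pos.mpr hkpos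
  set εp := Real.sqrt (2 * k * Real.log (1 / δ')) * ε +
      k * ε * (Real.exp ε - 1) / (Real.exp ε + 1) with hεpdef
  -- trivial case
  by_cases htriv : 1 ≤ k * δ + δ'
  · have h1 : ((Measure.pi fun i => M i S) E).toReal ≤ 1 := by
      have h2 : (Measure.pi fun i => M i S) E ≤ 1 := prob_le_one
      calc ((Measure.pi fun i => M i S) E).toReal ≤ (1:ℝ≥0∞).toReal :=
            ENNReal.toReal_mono (by simp) h2
        _ = 1 := by simp
    have h3 : 0 ≤ Real.exp εp * ((Measure.pi fun i => M i S') E).toReal :=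
      mul_nonneg (Real.exp_pos _).le ENNReal.toReal_nonneg
    linarith
  push_neg at htriv
  have hδ'1 : δ' < 1 := by
    have : (0:ℝ) ≤ k * δ := mul_nonneg hkR.le hδ
    linarith
  set L := Real.log (1 / δ') with hLdef
  have hL : 0 < L := Real.log_pos (one_lt_one_div hδ' hδ'1)
  set lam := Real.sqrt (2 * L / k) / ε with hlamdef
  have hlam : 0 < lam := div_pos (Real.sqrt_pos.mpr (by positivity)) hε
  -- per-coordinate decomposition
  have hDPi : ∀ i, ∀ E : Set (Y i), MeasurableSet E →
      ((M i S) E).toReal ≤ Real.exp ε * ((M i S') E).toReal + δ := fun i => hDP i S S' hnb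
  have hnb' : ∃ j, ∀ i', i' ≠ j → S' i' = S i' := by
    obtain ⟨j, hj⟩ := hnb
    exact ⟨j, fun i' h => (hj i' h).symm⟩
  have hDPi' : ∀ i, ∀ E : Set (Y i), MeasurableSet E →
      ((M i S') E).toReal ≤ Real.exp ε * ((M i S) E).toReal + δ := fun i => hDP i S' S hnb'
  have hdec : ∀ i, Nonempty (DPDecomp (M i S) (M i S') ε δ) := fun i =>
    dpdecomp_exists (M i S) (M i S') ε δ hε hδ (hDPi i) (hDPi' i)
  let D : ∀ i, DPDecomp (M i S) (M i S') ε δ := fun i => (hdec i).some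
  set μs : ∀ i, Measure (Y i) := fun i => M i S + M i S' with hμsdef
  haveI hfinμs : ∀ i, IsFiniteMeasure (μs i) := fun i =>
    show IsFiniteMeasure (M i S + M i S') from inferInstance
  haveI hsfμs : ∀ i, SigmaFinite (μs i) := fun i => inferInstance
  have hne : ∀ i, Nonempty (Y i) := by
    intro i
    by_contra hcon
    rw [not_nonempty_iff] at hcon
    have h1 : (M i S) Set.univ = 1 := measure_univ
    rw [Set.univ_eq_empty_iff.mpr hcon, measure_empty] at h1
    exact zero_ne_one h1
  haveI := fun i => hne i
  have x₀ : ∀ i, Y i := fun i => Classical.arbitrary (Y i)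
  -- product density representations
  haveI hsfP : ∀ i, SigmaFinite ((μs i).withDensity ((D i).p)) := fun i => by
    rw [show (μs i).withDensity ((D i).p) = M i S from (D i).hP]
    infer_instance
  haveI hsfQ : ∀ i, SigmaFinite ((μs i).withDensity ((D i).q)) := fun i => by
    rw [show (μs i).withDensity ((D i).q) = M i S' from (D i).hQ]
    infer_instance
  have hPpi : (Measure.pi fun i => M i S)
      = (Measure.pi μs).withDensity (fun y => ∏ i, (D i).p (y i)) := by
    have h1 : (fun i => M i S) = fun i => (μs i).withDensity ((D i).p) :=
      funext fun i => ((D i).hP).symm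
    rw [h1, pi_withDensity μs _ (fun i => (D i).meas_p) x₀]
  have hQpi : (Measure.pi fun i => M i S')
      = (Measure.pi μs).withDensity (fun y => ∏ i, (D i).q (y i)) := by
    have h1 : (fun i => M i S') = fun i => (μs i).withDensity ((D i).q) :=
      funext fun i => ((D i).hQ).symm
    rw [h1, pi_withDensity μs _ (fun i => (D i).meas_q) x₀]
  set μpi := Measure.pi μs with hμpidef
  -- measurable product functions
  have measP : Measurable (fun y : ∀ i, Y i => ∏ i, (D i).p (y i)) :=
    Finset.measurable_prod _ fun i _ => ((D i).meas_p).comp (measurable_pi_apply i)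
  have measQ : Measurable (fun y : ∀ i, Y i => ∏ i, (D i).q (y i)) :=
    Finset.measurable_prod _ fun i _ => ((D i).meas_q).comp (measurable_pi_apply i)
  have measM : Measurable (fun y : ∀ i, Y i => ∏ i, (D i).mt (y i)) :=
    Finset.measurable_prod _ fun i _ => ((D i).meas_mt).comp (measurable_pi_apply i)
  have measQt : Measurable (fun y : ∀ i, Y i => ∏ i, (D i).qt (y i)) :=
    Finset.measurable_prod _ fun i _ => ((D i).meas_qt).comp (measurable_pi_apply i)
  have measR : Measurable (fun y : ∀ i, Y i => ∏ i, (D i).r (y i)) :=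
    Finset.measurable_prod _ fun i _ => ((D i).meas_r).comp (measurable_pi_apply i)
  -- KEY ENNReal estimate
  have key : (Measure.pi fun i => M i S) E ≤
      ENNReal.ofReal (Real.exp εp) * (Measure.pi fun i => M i S') E
        + ENNReal.ofReal (k * δ + δ') := by
    rw [hPpi, hQpi, withDensity_apply _ hE, withDensity_apply _ hE]
    -- STEP A : remove the u-excess
    have stepA : ∫⁻ y in E, ∏ i, (D i).p (y i) ∂μpi ≤
        (∫⁻ y in E, ∏ i, (D i).mt (y i) ∂μpi) + (k : ℝ≥0∞) * ENNReal.ofReal δ := by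
      have hpt : ∀ y : ∀ i, Y i, ∏ i, (D i).p (y i) ≤ (∏ i, (D i).mt (y i)) +
          ∑ i, (D i).u (y i) * ∏ j ∈ Finset.univ.erase i, ((D j).mt (y j) + (D j).u (y j)) :=
        fun y => prod_le_prod_add_sum Finset.univ _ _ _ (fun i => (D i).hpmu (y i))
      have measSum : ∀ i : Fin k, Measurable (fun y : ∀ i, Y i =>
          (D i).u (y i) * ∏ j ∈ Finset.univ.erase i, ((D j).mt (y j) + (D j).u (y j))) := by
        intro i
        exact (((D i).meas_u).comp (measurable_pi_apply i)).mul
          (Finset.measurable_prod _ fun j _ =>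
            (((D j).meas_mt).add ((D j).meas_u)).comp (measurable_pi_apply j))
      calc ∫⁻ y in E, ∏ i, (D i).p (y i) ∂μpi
          ≤ ∫⁻ y in E, ((∏ i, (D i).mt (y i)) +
              ∑ i, (D i).u (y i) * ∏ j ∈ Finset.univ.erase i,
                ((D j).mt (y j) + (D j).u (y j))) ∂μpi :=
            lintegral_mono fun y => hpt y
        _ = (∫⁻ y in E, ∏ i, (D i).mt (y i) ∂μpi) +
            ∫⁻ y in E, ∑ i, (D i).u (y i) * ∏ j ∈ Finset.univ.erase i,
              ((D j).mt (y j) + (D j).u (y j)) ∂μpi := lintegral_add_left measM _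
        _ ≤ (∫⁻ y in E, ∏ i, (D i).mt (y i) ∂μpi) +
            ∫⁻ y, ∑ i, (D i).u (y i) * ∏ j ∈ Finset.univ.erase i,
              ((D j).mt (y j) + (D j).u (y j)) ∂μpi := by
            gcongr
            exact Measure.restrict_le_self
        _ ≤ (∫⁻ y in E, ∏ i, (D i).mt (y i) ∂μpi) + (k : ℝ≥0∞) * ENNReal.ofReal δ := by
            gcongr
            rw [lintegral_finset_sum _ (fun i _ => measSum i)]
            have hterm : ∀ i : Fin k, (∫⁻ y, (D i).u (y i) *
                ∏ j ∈ Finset.univ.erase i, ((D j).mt (y j) + (D j).u (y j)) ∂μpi)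
                ≤ ENNReal.ofReal δ := by
              intro i
              set g : ∀ j, Y j → ℝ≥0∞ :=
                Function.update (fun j => fun t => (D j).mt t + (D j).u t) i
                  (fun t => (D i).u t) with hgdef
              have hgmeas : ∀ j, Measurable (g j) := by
                intro j
                rcases eq_or_ne j i with h | h
                · subst h; rw [hgdef, Function.update_self]; exact (D j).meas_u
                · rw [hgdef, Function.update_of_ne h]
                  exact ((D j).meas_mt).add ((D j).meas_u)
              have hgeq : ∀ y : ∀ i, Y i, (D i).u (y i) *
                  ∏ j ∈ Finset.univ.erase i, ((D j).mt (y j) + (D j).u (y j))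
                  = ∏ j, g j (y j) := by
                intro y
                rw [← Finset.mul_prod_erase Finset.univ _ (Finset.mem_univ i)]
                congr 1
                · rw [hgdef, Function.update_self]
                · exact Finset.prod_congr rfl fun j hj => by
                    rw [hgdef, Function.update_of_ne (Finset.ne_of_mem_erase hj)]
              rw [lintegral_congr hgeq, lintegral_pi_prod μs g hgmeas x₀,
                ← Finset.mul_prod_erase Finset.univ _ (Finset.mem_univ i)]
              have hgi : ∫⁻ t, g i t ∂μs i ≤ ENNReal.ofReal δ := by
                rw [hgdef, Function.update_self]
                exact (D i).hu_int
              have hgj : ∀ j ∈ Finset.univ.erase i, ∫⁻ t, g j t ∂μs j ≤ 1 := by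
                intro j hj
                rw [hgdef, Function.update_of_ne (Finset.ne_of_mem_erase hj)]
                rw [lintegral_add_left (D j).meas_mt]
                exact (D j).hmu1
              calc (∫⁻ t, g i t ∂μs i) * ∏ j ∈ Finset.univ.erase i, ∫⁻ t, g j t ∂μs j
                  ≤ ENNReal.ofReal δ * 1 := by
                    apply mul_le_mul' hgi
                    exact Finset.prod_le_one (fun j _ => zero_le) hgj
                _ = ENNReal.ofReal δ := mul_one _
            calc ∑ i : Fin k, ∫⁻ y, (D i).u (y i) *
                ∏ j ∈ Finset.univ.erase i, ((D j).mt (y j) + (D j).u (y j)) ∂μpi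
                ≤ ∑ _i : Fin k, ENNReal.ofReal δ := Finset.sum_le_sum fun i _ => hterm i
              _ = (k : ℝ≥0∞) * ENNReal.ofReal δ := by
                  rw [Finset.sum_const, Finset.card_univ, Fintype.card_fin, nsmul_eq_mul]
    -- STEP B : Chernoff bound on the good/bad split
    have stepB : ∫⁻ y in E, ∏ i, (D i).mt (y i) ∂μpi ≤
        ENNReal.ofReal (Real.exp εp) * (∫⁻ y in E, ∏ i, (D i).q (y i) ∂μpi)
          + ENNReal.ofReal δ' := by
      set G : Set (∀ i, Y i) := {y | (∏ i, (D i).r (y i)) ≤ ENNReal.ofReal (Real.exp εp)}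
        with hGdef
      have hGm : MeasurableSet G := measurableSet_le measR measurable_const
      have hsplit : ∫⁻ y in E, ∏ i, (D i).mt (y i) ∂μpi =
          (∫⁻ y in E ∩ G, ∏ i, (D i).mt (y i) ∂μpi) +
          ∫⁻ y in E \ G, ∏ i, (D i).mt (y i) ∂μpi :=
        (lintegral_inter_add_diff _ E hGm).symm
      have hprod_split : ∀ y : ∀ i, Y i, (∏ i, (D i).mt (y i)) =
          (∏ i, (D i).r (y i)) * ∏ i, (D i).qt (y i) := by
        intro y
        rw [← Finset.prod_mul_distrib]
        exact Finset.prod_congr rfl fun i _ => (D i).hmr (y i)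
      -- good part
      have hgood : ∫⁻ y in E ∩ G, ∏ i, (D i).mt (y i) ∂μpi ≤
          ENNReal.ofReal (Real.exp εp) * ∫⁻ y in E, ∏ i, (D i).q (y i) ∂μpi := by
        calc ∫⁻ y in E ∩ G, ∏ i, (D i).mt (y i) ∂μpi
            ≤ ∫⁻ y in E ∩ G, ENNReal.ofReal (Real.exp εp) * ∏ i, (D i).qt (y i) ∂μpi := by
              apply setLIntegral_mono (measurable_const.mul measQt)
              intro y hy
              rw [hprod_split y]
              exact mul_le_mul_left hy.2 _
          _ = ENNReal.ofReal (Real.exp εp) * ∫⁻ y in E ∩ G, ∏ i, (D i).qt (y i) ∂μpi :=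
              lintegral_const_mul _ measQt
          _ ≤ ENNReal.ofReal (Real.exp εp) * ∫⁻ y in E, ∏ i, (D i).qt (y i) ∂μpi := by
              gcongr
              exact Set.inter_subset_left
          _ ≤ ENNReal.ofReal (Real.exp εp) * ∫⁻ y in E, ∏ i, (D i).q (y i) ∂μpi := by
              gcongr
              exact (D _).hqtq _
      -- bad part
      have hbad : ∫⁻ y in E \ G, ∏ i, (D i).mt (y i) ∂μpi ≤ ENNReal.ofReal δ' := by
        have hp1 : (1:ℝ) ≤ 1 + lam := by linarith
        have hA0 : (0:ℝ) < Real.exp (-ε) := exp_pos _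
        have hABr : Real.exp (-ε) < Real.exp ε := Real.exp_lt_exp.mpr (by linarith)
        set c1 : ℝ := (Real.exp ε ^ (1+lam) - Real.exp (-ε) ^ (1+lam)) /
            (Real.exp ε - Real.exp (-ε)) with hc1def
        set c0 : ℝ := c1 * Real.exp (-ε) - Real.exp (-ε) ^ (1+lam) with hc0def
        have hc0 : 0 ≤ c0 := chord_c0_nonneg hA0 hABr hp1
        have hc1 : 0 ≤ c1 := chord_c1_nonneg hA0 hABr hp1
        have hc0c1 : c0 ≤ c1 := by
          have hApos : (0:ℝ) < Real.exp (-ε) ^ (1+lam) := Real.rpow_pos_of_pos hA0 _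
          have hA1 : Real.exp (-ε) ≤ 1 := Real.exp_le_one_iff.mpr (by linarith)
          rw [hc0def]
          nlinarith
        set KK : ℝ := Real.exp (lam * (ε * (Real.exp ε - 1) / (Real.exp ε + 1))
            + lam ^ 2 * ε ^ 2 / 2) with hKKdef
        have hKK : c1 - c0 ≤ KK := chord_sum_le hε hlam.le
        -- per-coordinate mgf bound
        have hKi : ∀ i : Fin k, ∫⁻ t, ((D i).r t) ^ (1+lam) * (D i).qt t ∂μs i
            ≤ ENNReal.ofReal (c1 - c0) := by
          intro i
          have hXmeas : Measurable fun t => ((D i).r t) ^ (1+lam) * (D i).qt t :=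
            ((D i).meas_r.pow_const _).mul (D i).meas_qt
          have hpt : ∀ t, ((D i).r t) ^ (1+lam) * (D i).qt t
              + ENNReal.ofReal c0 * (D i).qt t ≤ ENNReal.ofReal c1 * (D i).mt t := by
            intro t
            have hrfin : (D i).r t ≠ ∞ :=
              ne_top_of_le_ne_top ENNReal.ofReal_ne_top ((D i).hr_ub t)
            set ρ := ((D i).r t).toReal with hρdef
            have hρA : Real.exp (-ε) ≤ ρ := by
              have := ENNReal.toReal_mono hrfin ((D i).hr_lb t)
              rwa [ENNReal.toReal_ofReal hA0.le] at this
            have hρB : ρ ≤ Real.exp ε := by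
              have := ENNReal.toReal_mono ENNReal.ofReal_ne_top ((D i).hr_ub t)
              rwa [ENNReal.toReal_ofReal (exp_pos ε).le] at this
            have hρ0 : 0 < ρ := lt_of_lt_of_le hA0 hρA
            have hrofReal : (D i).r t = ENNReal.ofReal ρ :=
              (ENNReal.ofReal_toReal hrfin).symm
            have hchord := chord_ineq_gen hA0 hABr hp1 hρA hρB
            rw [(D i).hmr t, hrofReal, ENNReal.ofReal_rpow_of_pos hρ0,
              ← add_mul, ← mul_assoc]
            apply mul_le_mul_left
            rw [← ENNReal.ofReal_add (Real.rpow_nonneg hρ0.le _) hc0,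
              ← ENNReal.ofReal_mul hc1]
            exact ENNReal.ofReal_le_ofReal hchord
          have h2 : (∫⁻ t, ((D i).r t) ^ (1+lam) * (D i).qt t ∂μs i)
              + ENNReal.ofReal c0 * (∫⁻ t, (D i).qt t ∂μs i)
              ≤ ENNReal.ofReal c1 * ∫⁻ t, (D i).mt t ∂μs i := by
            rw [← lintegral_const_mul _ (D i).meas_qt,
              ← lintegral_add_left hXmeas, ← lintegral_const_mul _ (D i).meas_mt]
            exact lintegral_mono hpt
          have hVfin : (∫⁻ t, (D i).qt t ∂μs i) ≠ ∞ :=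
            ne_top_of_le_ne_top (by simp) (D i).hqt1
          have hM1 : (∫⁻ t, (D i).mt t ∂μs i) ≤ 1 := le_trans (D i).hm_le_q (D i).hqt1
          have h3 : ENNReal.ofReal c1 * (∫⁻ t, (D i).mt t ∂μs i)
              ≤ ENNReal.ofReal (c1 - c0) + ENNReal.ofReal c0 * ∫⁻ t, (D i).qt t ∂μs i := by
            have hsplitc : ENNReal.ofReal c1 = ENNReal.ofReal (c1 - c0)
                + ENNReal.ofReal c0 := by
              rw [← ENNReal.ofReal_add (by linarith) hc0]
              ring_nf
            rw [hsplitc, add_mul]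
            apply add_le_add
            · calc ENNReal.ofReal (c1 - c0) * (∫⁻ t, (D i).mt t ∂μs i)
                  ≤ ENNReal.ofReal (c1 - c0) * 1 := mul_le_mul_right hM1 _
                _ = ENNReal.ofReal (c1 - c0) := mul_one _
            · exact mul_le_mul_right (D i).hm_le_q _
          have h4 := le_trans h2 h3
          exact (ENNReal.add_le_add_iff_right
            (ENNReal.mul_ne_top ENNReal.ofReal_ne_top hVfin)).mp h4
        -- pointwise Chernoff bound off G
        have hRfin : ∀ y : ∀ i, Y i, (∏ i, (D i).r (y i)) ≠ ∞ := fun y =>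
          (ENNReal.prod_lt_top fun i _ =>
            lt_of_le_of_lt ((D i).hr_ub (y i)) ENNReal.ofReal_lt_top).ne
        have hR0 : ∀ y : ∀ i, Y i, (∏ i, (D i).r (y i)) ≠ 0 := by
          intro y
          apply ne_of_gt
          rw [CanonicallyOrderedAdd.prod_pos]
          intro i _
          exact lt_of_lt_of_le (ENNReal.ofReal_pos.mpr hA0) ((D i).hr_lb (y i))
        have hptGc : ∀ y : ∀ i, Y i, y ∉ G → ∏ i, (D i).mt (y i) ≤
            ENNReal.ofReal (Real.exp (-εp * lam)) *
              ∏ i, ((D i).r (y i)) ^ (1+lam) * (D i).qt (y i) := by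
          intro y hy
          have hlt : ENNReal.ofReal (Real.exp εp) < ∏ i, (D i).r (y i) := by
            rw [hGdef] at hy
            exact not_le.mp hy
          have hone : (1:ℝ≥0∞) ≤
              (ENNReal.ofReal (Real.exp (-εp)) * ∏ i, (D i).r (y i)) ^ lam := by
            have h2 : (1:ℝ≥0∞) = ENNReal.ofReal (Real.exp (-εp))
                * ENNReal.ofReal (Real.exp εp) := by
              rw [← ENNReal.ofReal_mul (exp_pos _).le, ← Real.exp_add]
              simp
            have h3 : (1:ℝ≥0∞) ≤ ENNReal.ofReal (Real.exp (-εp))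
                * ∏ i, (D i).r (y i) := by
              rw [h2]
              exact mul_le_mul_right hlt.le _
            calc (1:ℝ≥0∞) = 1 ^ lam := (ENNReal.one_rpow lam).symm
              _ ≤ _ := ENNReal.rpow_le_rpow h3 hlam.le
          have hcalc1 : ENNReal.ofReal (Real.exp (-εp)) ^ lam
              = ENNReal.ofReal (Real.exp (-εp * lam)) := by
            rw [ENNReal.ofReal_rpow_of_pos (exp_pos _),
              Real.rpow_def_of_pos (exp_pos _), Real.log_exp]
          have hcalc2 : (∏ i, (D i).r (y i)) ^ lam * (∏ i, (D i).r (y i))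
              = ∏ i, ((D i).r (y i)) ^ (1+lam) := by
            rw [← prod_rpow_distrib Finset.univ _ (1+lam)
              (fun i _ => ne_top_of_le_ne_top ENNReal.ofReal_ne_top ((D i).hr_ub (y i))),
              ENNReal.rpow_add 1 lam (hR0 y) (hRfin y), ENNReal.rpow_one]
            ring
          calc ∏ i, (D i).mt (y i)
              = (∏ i, (D i).r (y i)) * ∏ i, (D i).qt (y i) := hprod_split y
            _ ≤ (ENNReal.ofReal (Real.exp (-εp)) * ∏ i, (D i).r (y i)) ^ lam *
                ((∏ i, (D i).r (y i)) * ∏ i, (D i).qt (y i)) :=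
                le_mul_of_one_le_left' hone
            _ = ENNReal.ofReal (Real.exp (-εp)) ^ lam *
                ((∏ i, (D i).r (y i)) ^ lam * (∏ i, (D i).r (y i)))
                * ∏ i, (D i).qt (y i) := by
                rw [ENNReal.mul_rpow_of_ne_top ENNReal.ofReal_ne_top (hRfin y)]
                ring
            _ = ENNReal.ofReal (Real.exp (-εp * lam)) *
                ∏ i, ((D i).r (y i)) ^ (1+lam) * (D i).qt (y i) := by
                rw [hcalc1, hcalc2, mul_assoc, ← Finset.prod_mul_distrib]
        -- assemble the bad part
        have hhmeas : Measurable fun y : ∀ i, Y i =>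
            ∏ i, ((D i).r (y i)) ^ (1+lam) * (D i).qt (y i) :=
          Finset.measurable_prod _ fun i _ =>
            ((((D i).meas_r).comp (measurable_pi_apply i)).pow_const _).mul
              (((D i).meas_qt).comp (measurable_pi_apply i))
        calc ∫⁻ y in E \ G, ∏ i, (D i).mt (y i) ∂μpi
            ≤ ∫⁻ y in E \ G, ENNReal.ofReal (Real.exp (-εp * lam)) *
                ∏ i, ((D i).r (y i)) ^ (1+lam) * (D i).qt (y i) ∂μpi := by
              apply setLIntegral_mono (measurable_const.mul hhmeas)
              intro y hy
              exact hptGc y hy.2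
          _ = ENNReal.ofReal (Real.exp (-εp * lam)) *
              ∫⁻ y in E \ G, ∏ i, ((D i).r (y i)) ^ (1+lam) * (D i).qt (y i) ∂μpi :=
              lintegral_const_mul _ hhmeas
          _ ≤ ENNReal.ofReal (Real.exp (-εp * lam)) *
              ∫⁻ y, ∏ i, ((D i).r (y i)) ^ (1+lam) * (D i).qt (y i) ∂μpi :=
              mul_le_mul_right (setLIntegral_le_lintegral _ _) _
          _ = ENNReal.ofReal (Real.exp (-εp * lam)) *
              ∏ i, ∫⁻ t, ((D i).r t) ^ (1+lam) * (D i).qt t ∂μs i := by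
              rw [lintegral_pi_prod μs (fun i => fun t => ((D i).r t) ^ (1+lam) * (D i).qt t)
                (fun i => ((D i).meas_r.pow_const _).mul (D i).meas_qt) x₀]
          _ ≤ ENNReal.ofReal (Real.exp (-εp * lam)) * ∏ _i : Fin k, ENNReal.ofReal (c1 - c0) :=
              mul_le_mul_right (Finset.prod_le_prod' fun i _ => hKi i) _
          _ ≤ ENNReal.ofReal (Real.exp (-εp * lam)) * ∏ _i : Fin k, ENNReal.ofReal KK :=
              mul_le_mul_right (Finset.prod_le_prod' fun i _ =>
                ENNReal.ofReal_le_ofReal hKK) _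
          _ = ENNReal.ofReal (Real.exp (-εp * lam) * KK ^ k) := by
              rw [Finset.prod_const, Finset.card_univ, Fintype.card_fin,
                ← ENNReal.ofReal_pow (by rw [hKKdef]; positivity),
                ← ENNReal.ofReal_mul (exp_pos _).le]
          _ ≤ ENNReal.ofReal δ' := by
              apply ENNReal.ofReal_le_ofReal
              have hKKk : KK ^ k = Real.exp (k * (lam * (ε * (Real.exp ε - 1) /
                  (Real.exp ε + 1)) + lam ^ 2 * ε ^ 2 / 2)) := by
                rw [hKKdef, ← Real.exp_nat_mul]
              rw [hKKk, ← Real.exp_add]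
              have hkne : (k:ℝ) ≠ 0 := hkR.ne'
              have hlamε : lam * ε = Real.sqrt (2 * L / k) := div_mul_cancel₀ _ hε.ne'
              have hs2 : Real.sqrt (2 * L / k) ^ 2 = 2 * L / k :=
                Real.sq_sqrt (by positivity)
              have hss : Real.sqrt (2 * L / k) * Real.sqrt (2 * k * L) = 2 * L := by
                rw [← Real.sqrt_mul (by positivity)]
                have he : 2 * L / k * (2 * k * L) = (2 * L) ^ 2 := by
                  field_simp
                rw [he, Real.sqrt_sq (by positivity)]
              have hexpand : -εp * lam + k * (lam * (ε * (Real.exp ε - 1) /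
                  (Real.exp ε + 1)) + lam ^ 2 * ε ^ 2 / 2)
                  = -((lam * ε) * Real.sqrt (2 * k * L)) + k * ((lam * ε) ^ 2) / 2 := by
                rw [hεpdef]
                ring
              have hfinal : -εp * lam + k * (lam * (ε * (Real.exp ε - 1) /
                  (Real.exp ε + 1)) + lam ^ 2 * ε ^ 2 / 2) = -L := by
                rw [hexpand, hlamε, hs2, hss]
                field_simp
                ring
              rw [hfinal]
              have hLval : -L = Real.log δ' := by
                rw [hLdef, one_div, Real.log_inv, neg_neg]
              rw [hLval, Real.exp_log hδ']
      rw [hsplit]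
      exact add_le_add hgood hbad
    calc ∫⁻ y in E, ∏ i, (D i).p (y i) ∂μpi
        ≤ (∫⁻ y in E, ∏ i, (D i).mt (y i) ∂μpi) + (k : ℝ≥0∞) * ENNReal.ofReal δ := stepA
      _ ≤ (ENNReal.ofReal (Real.exp εp) * (∫⁻ y in E, ∏ i, (D i).q (y i) ∂μpi)
            + ENNReal.ofReal δ') + (k : ℝ≥0∞) * ENNReal.ofReal δ := add_le_add_left stepB _
      _ = ENNReal.ofReal (Real.exp εp) * (∫⁻ y in E, ∏ i, (D i).q (y i) ∂μpi)
            + ENNReal.ofReal (k * δ + δ') := by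
          rw [ENNReal.ofReal_add (by positivity) hδ'.le]
          have : (k : ℝ≥0∞) * ENNReal.ofReal δ = ENNReal.ofReal (k * δ) := by
            rw [ENNReal.ofReal_mul hkR.le, ENNReal.ofReal_natCast]
          rw [this]
          ring
  -- convert to reals
  have hQfin : (Measure.pi fun i => M i S') E ≠ ∞ := measure_ne_top _ _
  have hRHSfin : ENNReal.ofReal (Real.exp εp) * (Measure.pi fun i => M i S') E
      + ENNReal.ofReal (k * δ + δ') ≠ ∞ :=
    ENNReal.add_ne_top.mpr ⟨ENNReal.mul_ne_top ENNReal.ofReal_ne_top hQfin,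
      ENNReal.ofReal_ne_top⟩
  have := ENNReal.toReal_mono hRHSfin key
  rw [ENNReal.toReal_add (ENNReal.mul_ne_top ENNReal.ofReal_ne_top hQfin)
    ENNReal.ofReal_ne_top, ENNReal.toReal_mul, ENNReal.toReal_ofReal (Real.exp_pos _).le,
    ENNReal.toReal_ofReal (by positivity)] at this
  exact this
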